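/- For any object j of a category C, the full subcategory of the comma category (j ↓ s) (where s : Tw(C)^op → C is the source functor) consisting of objects whose first arrow is the identity of j (i.e. arrows of the form id_j followed by j → b) is a coreflective subcategory: the inclusion has a right adjoint. Moreover this subcategory has a terminal object, namely the object corresponding to the identity arrow j = j = j. -/

import Mathlib

/-!
STATEMENT 2: For any object `j` of a category `C`, the full subcategory of
the comma category `(j ↓ s)` (where `s : Tw(C)ᵒᵖ ⥤ C` is the source functor)
on objects whose first arrow is the identity of `j` is coreflective: the
inclusion has a right adjoint.  Moreover this subcategory has a terminal
object, namely the object corresponding to the identity arrow `j = j = j`.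
-/

open CategoryTheory Simplicial CategoryTheory.Limits

universe v u

/-- The opposite of the twisted arrow category of `C`: objects are arrows of
`C`; a morphism from `(a → b)` to `(c → d)` is a pair `u : a → c`, `v : d → b`
with `u ≫ (c → d) ≫ v = (a → b)`. -/
structure TwOp (C : Type u) [Category.{v} C] : Type max u v where
  left : C
  right : C
  hom : left ⟶ right

instance (C : Type u) [Category.{v} C] : Category (TwOp C) where
  Hom A B := { p : (A.left ⟶ B.left) × (B.right ⟶ A.right) //
    p.1 ≫ B.hom ≫ p.2 = A.hom }
  id A := ⟨(𝟙 _, 𝟙 _), by simp⟩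
  comp f g := ⟨(f.val.1 ≫ g.val.1, g.val.2 ≫ f.val.2), by
    dsimp only
    slice_lhs 2 4 => rw [g.property]
    simpa using f.property⟩
  id_comp f := by apply Subtype.ext; simp
  comp_id f := by apply Subtype.ext; simp
  assoc f g h := by apply Subtype.ext; simp

/-- The source functor `Tw(C)ᵒᵖ ⥤ C`, remembering the source of an arrow. -/
def TwOp.src (C : Type u) [Category.{v} C] : TwOp C ⥤ C where
  obj A := A.left
  map f := f.val.1


variable {C : Type u} [Category.{v} C]

/-- The predicate selecting the objects of `(j ↓ s)` whose first arrow is the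
identity of `j`, i.e. those of the form `id_j` followed by `j → b`. -/
def IdFirst (j : C) (Z : StructuredArrow j (TwOp.src C)) : Prop :=
  Z.right.left = j ∧ HEq Z.hom (𝟙 j)

/-- The object of the subcategory corresponding to `j = j = j`. -/
def idObj (j : C) : ObjectProperty.FullSubcategory (IdFirst j) :=
  ⟨StructuredArrow.mk (Y := TwOp.mk j j (𝟙 j)) (𝟙 j), rfl, HEq.rfl⟩

/-- Every object of the subcategory is (up to defeq) of the canonical form. -/
lemma IdFirst.cases {j : C} {motive : ObjectProperty.FullSubcategory (IdFirst j) → Prop}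
    (h : ∀ (b : C) (g : j ⟶ b),
      motive ⟨StructuredArrow.mk (Y := TwOp.mk j b g) (𝟙 j), rfl, HEq.rfl⟩) :
    ∀ A, motive A := by
  rintro ⟨⟨⟨⟩, ⟨a, b, g⟩, f⟩, e, hh⟩
  dsimp [TwOp.src] at e hh
  subst e
  obtain rfl := eq_of_heq hh
  exact h b g

lemma IdFirst.hom_eq {j : C} (A : ObjectProperty.FullSubcategory (IdFirst j)) :
    A.obj.hom = eqToHom A.property.1.symm := by
  induction A using IdFirst.cases with
  | h b g => rfl

@[simp] lemma TwOp.src_map {A B : TwOp C} (f : A ⟶ B) :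
    (TwOp.src C).map f = f.val.1 := rfl

/-- The coreflector: sends `(f : j → a, g : a → b)` to `(𝟙 j, f ≫ g)`. -/
def idFirstCoreflector (j : C) :
    StructuredArrow j (TwOp.src C) ⥤ ObjectProperty.FullSubcategory (IdFirst j) where
  obj Z := ⟨StructuredArrow.mk (Y := TwOp.mk j Z.right.right (Z.hom ≫ Z.right.hom)) (𝟙 j),
    rfl, HEq.rfl⟩
  map {Z W} f := ObjectProperty.homMk <| StructuredArrow.homMk
    (⟨(𝟙 j, f.right.val.2), by
      have hw : Z.hom ≫ f.right.val.1 = W.hom := StructuredArrow.w f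
      have hp : f.right.val.1 ≫ W.right.hom ≫ f.right.val.2 = Z.right.hom :=
        f.right.property
      dsimp only
      rw [Category.id_comp, ← hw]
      exact (Category.assoc _ _ _).trans ((Category.assoc _ _ _).trans (congrArg (Z.hom ≫ ·) hp))⟩ :
      TwOp.mk j Z.right.right (Z.hom ≫ Z.right.hom) ⟶
      TwOp.mk j W.right.right (W.hom ≫ W.right.hom))
    (by simp; exact Category.comp_id _)
  map_id Z := by
    apply ObjectProperty.hom_ext
    apply StructuredArrow.hom_ext
    apply Subtype.ext
    rfl
  map_comp f g := by
    apply ObjectProperty.hom_ext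
    apply StructuredArrow.hom_ext
    apply Subtype.ext
    dsimp [CategoryStruct.comp]
    refine Prod.ext ?_ rfl
    exact (Category.id_comp _).symm

@[simp] lemma TwOp.comp_val {A B D : TwOp C} (f : A ⟶ B) (g : B ⟶ D) :
    (f ≫ g).val = (f.val.1 ≫ g.val.1, g.val.2 ≫ f.val.2) := rfl

@[simp] lemma TwOp.id_val (A : TwOp C) : (𝟙 A : A ⟶ A).val = (𝟙 A.left, 𝟙 A.right) := rfl

@[simp] lemma idFirstCoreflector_map_right_val {j : C}
    {Z W : StructuredArrow j (TwOp.src C)} (f : Z ⟶ W) :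
    ((idFirstCoreflector j).map f).hom.right.val = (𝟙 j, f.right.val.2) := rfl

@[simp] lemma fsub_comp_right {j : C} {A B D : ObjectProperty.FullSubcategory (IdFirst j)}
    (f : A ⟶ B) (g : B ⟶ D) :
    (f ≫ g).hom.right = f.hom.right ≫ g.hom.right := rfl

@[simp] lemma fsub_id_right {j : C} (A : ObjectProperty.FullSubcategory (IdFirst j)) :
    (𝟙 A : A ⟶ A).hom.right = 𝟙 A.obj.right := rfl

@[simp] lemma fullSubcategoryInclusion_map' {P : C → Prop}
    {A B : ObjectProperty.FullSubcategory P} (f : A ⟶ B) :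
    (ObjectProperty.ι P).map f = f.hom := rfl

theorem idFirst_subcategory_coreflective_with_terminal (j : C) :
    (ObjectProperty.ι (IdFirst j)).IsLeftAdjoint ∧
      Nonempty (Limits.IsTerminal (idObj j)) := by
  constructor
  · refine ⟨idFirstCoreflector j, ⟨Adjunction.mkOfUnitCounit ⟨?_, ?_, ?_, ?_⟩⟩⟩
    · -- unit : 𝟭 ⟶ incl ⋙ coreflector
      refine ⟨fun A => ObjectProperty.homMk <| StructuredArrow.homMk
        (⟨(eqToHom A.property.1, 𝟙 A.obj.right.right), ?_⟩ :
          A.obj.right ⟶ TwOp.mk j A.obj.right.right (A.obj.hom ≫ A.obj.right.hom)) ?_, ?_⟩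
      · induction A using IdFirst.cases with
        | h b g => simp; exact Category.id_comp _
      · induction A using IdFirst.cases with
        | h b g => simp [TwOp.src, ObjectProperty.ι, inducedFunctor, idFirstCoreflector]; exact Category.comp_id _
      · intro A B f
        induction A using IdFirst.cases with
        | h a ga =>
          induction B using IdFirst.cases with
          | h b gb =>
            apply ObjectProperty.hom_ext
            apply StructuredArrow.hom_ext
            apply Subtype.ext
            have hwf : (𝟙 j) ≫ f.hom.right.val.1 = 𝟙 j := StructuredArrow.w f.hom
            rw [Category.id_comp] at hwf
            have hp : f.hom.right.val.1 ≫ gb ≫ f.hom.right.val.2 = ga := f.hom.right.property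
            dsimp [CategoryStruct.comp, ObjectProperty.ι, inducedFunctor,
              idFirstCoreflector]
            refine Prod.ext ?_ ?_
            · exact (Category.comp_id _).trans (hwf.trans (Category.id_comp _).symm)
            · exact (Category.id_comp _).trans (Category.comp_id _).symm
    · -- counit : coreflector ⋙ incl ⟶ 𝟭
      refine ⟨fun Z => StructuredArrow.homMk
        (⟨(Z.hom, 𝟙 Z.right.right), by simp; rfl⟩ :
          TwOp.mk j Z.right.right (Z.hom ≫ Z.right.hom) ⟶ Z.right)
        (by dsimp [TwOp.src, idFirstCoreflector]; exact Category.id_comp _), ?_⟩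
      · intro Z W f
        apply StructuredArrow.hom_ext
        apply Subtype.ext
        have hwf : Z.hom ≫ f.right.val.1 = W.hom := StructuredArrow.w f
        dsimp [CategoryStruct.comp, ObjectProperty.ι, inducedFunctor,
          idFirstCoreflector]
        refine Prod.ext ?_ ?_ <;> simp [hwf]
        · exact (Category.id_comp _).trans hwf.symm
        · exact (Category.id_comp _).trans (Category.comp_id _).symm
    · -- left triangle
      apply NatTrans.ext
      funext A
      induction A using IdFirst.cases with
      | h b g =>
        apply StructuredArrow.hom_ext
        apply Subtype.ext
        show _ = _
        refine Prod.ext ?_ ?_ <;>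
          simp only [NatTrans.comp_app, Functor.whiskerLeft_app, Functor.whiskerRight_app,
            Functor.associator_hom_app, Functor.associator_inv_app, NatTrans.id_app,
            StructuredArrow.comp_right, StructuredArrow.id_right,
            StructuredArrow.homMk_right, fullSubcategoryInclusion_map',
            idFirstCoreflector_map_right_val, TwOp.comp_val, TwOp.id_val] <;>
          simp
        · exact Category.id_comp _
        · exact Category.id_comp _
    · -- right triangle
      apply NatTrans.ext
      funext Z
      apply ObjectProperty.hom_ext
      apply StructuredArrow.hom_ext
      apply Subtype.ext
      refine Prod.ext ?_ ?_ <;>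
          simp only [NatTrans.comp_app, Functor.whiskerLeft_app, Functor.whiskerRight_app,
            Functor.associator_hom_app, Functor.associator_inv_app, NatTrans.id_app,
            StructuredArrow.comp_right, StructuredArrow.id_right,
            StructuredArrow.homMk_right, fullSubcategoryInclusion_map',
            idFirstCoreflector_map_right_val, TwOp.comp_val, TwOp.id_val] <;>
          simp
      · exact Category.id_comp _
      · exact Category.id_comp _
  · refine ⟨IsTerminal.ofUniqueHom (fun A => ObjectProperty.homMk <| StructuredArrow.homMk
      (⟨(eqToHom A.property.1, eqToHom A.property.1.symm ≫ A.obj.right.hom), ?_⟩ :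
        A.obj.right ⟶ TwOp.mk j j (𝟙 j)) ?_) ?_⟩
    · induction A using IdFirst.cases with
      | h b g => simp
    · induction A using IdFirst.cases with
      | h b g => simp [TwOp.src, idObj]
    · intro A m
      induction A using IdFirst.cases with
      | h b g =>
        apply ObjectProperty.hom_ext
        apply StructuredArrow.hom_ext
        apply Subtype.ext
        have hw : (𝟙 j) ≫ m.hom.right.val.1 = 𝟙 j := StructuredArrow.w m.hom
        rw [Category.id_comp] at hw
        have hp : m.hom.right.val.1 ≫ (𝟙 j) ≫ m.hom.right.val.2 = g := m.hom.right.property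
        rw [hw] at hp
        refine Prod.ext ?_ ?_
        · simp [hw, idObj, StructuredArrow.homMk]; rfl
        · simp [idObj, StructuredArrow.homMk]
          exact (Category.id_comp _).symm.trans ((Category.id_comp _).symm.trans hp)
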